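/- Let T > 0, C > 0, k ≥ 0, m > k with m ≥ 2, K > 0 and λ, ε, β > 0. Let w : (0,T)×H → ℝ be bounded on bounded subsets of (0,T)×H and satisfy w(t,x) ≥ −C(1+‖x‖^k) for all (t,x) ∈ (0,T)×H. Then for every R > 0 there exists M > 0 such that whenever the inf-convolution v = w_{λ,ε,β} is Fréchet differentiable at a point (t,x) ∈ (0,T)×B_R, one has |v_t(t,x)| ≤ M and there exists q ∈ H with ‖q‖ ≤ M such that the spatial Fréchet derivative satisfies Dv(t,x) = Bq. -/

import Mathlib

open scoped InnerProductSpace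

/-- The inf-convolution
`w_{λ,ε,β}(t,x) = inf_{(s,y)∈(0,T)×H} { w(s,y) + ‖x−y‖₋₁²/(2ε) + (t−s)²/(2β) + λ e^{2mK(T−s)}‖y‖^m }`,
where `‖z‖₋₁² = ⟨Bz,z⟩`. -/
noncomputable def infConv {H : Type*} [NormedAddCommGroup H] [InnerProductSpace ℝ H]
    (B : H →L[ℝ] H) (T m K lam ε β : ℝ) (w : ℝ → H → ℝ) (t : ℝ) (x : H) : ℝ :=
  sInf ((fun p : ℝ × H =>
      w p.1 p.2 + ⟪B (x - p.2), x - p.2⟫_ℝ / (2 * ε) + (t - p.1) ^ 2 / (2 * β)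
        + lam * Real.exp (2 * m * K * (T - p.1)) * ‖p.2‖ ^ m) ''
    (Set.Ioo 0 T ×ˢ (Set.univ : Set H)))

lemma rpow_aux0 {C lam k m : ℝ} (hC : 0 < C) (hlam : 0 < lam) (hkm : k < m) :
    ∀ r : ℝ, max 1 ((2*C/lam) ^ (m-k)⁻¹) < r → C * r ^ k ≤ lam / 2 * r ^ m := by
  intro r hr
  set r0 : ℝ := max 1 ((2*C/lam) ^ (m-k)⁻¹) with hr0
  have hb : (0:ℝ) ≤ 2*C/lam := by positivity
  have hmk : 0 < m - k := sub_pos.2 hkm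
  have hr1 : (1:ℝ) < r := lt_of_le_of_lt (le_max_left _ _) hr
  have hrpos : (0:ℝ) < r := by linarith
  have h1 : ((2*C/lam) ^ (m-k)⁻¹) ^ (m-k) = 2*C/lam := by
    rw [← Real.rpow_mul hb, inv_mul_cancel₀ (ne_of_gt hmk), Real.rpow_one]
  have h2 : 2*C/lam ≤ r ^ (m-k) := by
    rw [← h1]
    exact Real.rpow_le_rpow (Real.rpow_nonneg hb _)
      (le_trans (le_max_right _ _) hr.le) hmk.le
  have h3 : r ^ m = r ^ k * r ^ (m-k) := by
    rw [← Real.rpow_add hrpos]; ring_nf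
  have hrk : 0 ≤ r ^ k := Real.rpow_nonneg hrpos.le _
  calc C * r ^ k = lam / 2 * (r ^ k * (2*C/lam)) := by field_simp
    _ ≤ lam / 2 * (r ^ k * r ^ (m-k)) := by
        have := mul_le_mul_of_nonneg_left h2 hrk
        nlinarith
    _ = lam / 2 * r ^ m := by rw [h3]

lemma rpow_aux2 {C lam k m A : ℝ} (hC : 0 < C) (hlam : 0 < lam) (hkm : k < m)
    (hm : 0 < m) :
    ∀ r : ℝ, 0 ≤ r → lam * r ^ m - C * (1 + r ^ k) ≤ A →
      r ≤ max (max 1 ((2*C/lam) ^ (m-k)⁻¹)) ((2*(A+C)/lam) ^ m⁻¹) := by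
  intro r hr hle
  set r0 : ℝ := max 1 ((2*C/lam) ^ (m-k)⁻¹) with hr0
  rcases le_or_gt r r0 with h | h
  · exact le_trans h (le_max_left _ _)
  · have hkey := rpow_aux0 hC hlam hkm r h
    have hrk : 0 ≤ r ^ k := Real.rpow_nonneg hr _
    have h4 : lam / 2 * r ^ m ≤ A + C := by nlinarith
    have h5 : r ^ m ≤ 2*(A+C)/lam := by
      rw [le_div_iff₀ hlam]
      nlinarith
    have h6 : r = (r ^ m) ^ m⁻¹ := by
      rw [← Real.rpow_mul hr, mul_inv_cancel₀ (ne_of_gt hm), Real.rpow_one]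
    have h7 : (r ^ m) ^ m⁻¹ ≤ (2*(A+C)/lam) ^ m⁻¹ :=
      Real.rpow_le_rpow (Real.rpow_nonneg hr _) h5 (inv_nonneg.2 hm.le)
    exact le_trans (h6.le.trans h7) (le_max_right _ _)

lemma rpow_aux3 {C lam k m : ℝ} (hC : 0 < C) (hlam : 0 < lam) (hk : 0 ≤ k) (hkm : k < m) :
    ∀ r : ℝ, 0 ≤ r →
      -(C * (1 + (max 1 ((2*C/lam) ^ (m-k)⁻¹)) ^ k)) ≤ -C * (1 + r ^ k) + lam * r ^ m := by
  intro r hr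
  set r0 : ℝ := max 1 ((2*C/lam) ^ (m-k)⁻¹) with hr0
  have hr00 : (0:ℝ) ≤ r0 := le_trans zero_le_one (le_max_left _ _)
  have hr0k : 0 ≤ r0 ^ k := Real.rpow_nonneg hr00 _
  rcases le_or_gt r r0 with h | h
  · have h1 : r ^ k ≤ r0 ^ k := Real.rpow_le_rpow hr h hk
    have h2 : 0 ≤ r ^ m := Real.rpow_nonneg hr _
    nlinarith
  · have hkey := rpow_aux0 hC hlam hkm r h
    have hrm : 0 ≤ r ^ m := Real.rpow_nonneg hr _
    nlinarith

lemma exists_rep {H : Type*} [NormedAddCommGroup H] [InnerProductSpace ℝ H] [CompleteSpace H]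
    (B : H →L[ℝ] H) (hBsa : ∀ u v : H, ⟪B u, v⟫_ℝ = ⟪u, B v⟫_ℝ)
    (φ : H →ₗ[ℝ] ℝ) (M : ℝ) (hM : 0 ≤ M) (hbd : ∀ h : H, |φ h| ≤ M * ‖B h‖) :
    ∃ q : H, ‖q‖ ≤ M ∧ ∀ h : H, φ h = ⟪B q, h⟫_ℝ := by
  set Bl : H →ₗ[ℝ] H := (B : H →ₗ[ℝ] H) with hBl
  have hker : LinearMap.ker Bl ≤ LinearMap.ker φ := by
    intro h hh
    have hB0 : B h = 0 := hh
    have h1 := hbd h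
    rw [hB0, norm_zero, mul_zero] at h1
    exact LinearMap.mem_ker.mpr (abs_eq_zero.mp (le_antisymm h1 (abs_nonneg _)))
  set ψ : LinearMap.range Bl →ₗ[ℝ] ℝ :=
    (Submodule.liftQ (LinearMap.ker Bl) φ hker).comp
      (Bl.quotKerEquivRange.symm : LinearMap.range Bl →ₗ[ℝ] H ⧸ LinearMap.ker Bl) with hψ
  have hψval : ∀ h : H, ψ ⟨Bl h, LinearMap.mem_range_self Bl h⟩ = φ h := by
    intro h
    simp [hψ, LinearMap.quotKerEquivRange_symm_apply_image]
  set pf : H →ₗ.[ℝ] ℝ := ⟨LinearMap.range Bl, ψ⟩ with hpf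
  have hpfbd : ∀ z : pf.domain, pf z ≤ M * ‖(z : H)‖ := by
    rintro ⟨z, hz⟩
    obtain ⟨h, rfl⟩ := hz
    have : pf ⟨Bl h, LinearMap.mem_range_self Bl h⟩ = φ h := hψval h
    rw [this]
    calc φ h ≤ |φ h| := le_abs_self _
      _ ≤ M * ‖B h‖ := hbd h
      _ = M * ‖(Bl h : H)‖ := rfl
  obtain ⟨g, hg1, hg2⟩ := exists_extension_of_le_sublinear pf (fun z => M * ‖z‖)
    (fun c hc z => by
      show M * ‖c • z‖ = c * (M * ‖z‖)
      rw [norm_smul, Real.norm_of_nonneg hc.le]; ring)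
    (fun a b => by
      show M * ‖a + b‖ ≤ M * ‖a‖ + M * ‖b‖
      have := norm_add_le a b
      nlinarith [norm_nonneg a, norm_nonneg b]) hpfbd
  have habs : ∀ z : H, |g z| ≤ M * ‖z‖ := by
    intro z
    rw [abs_le]
    constructor
    · have := hg2 (-z)
      simp only [map_neg, norm_neg] at this
      linarith
    · exact hg2 z
  set gC : H →L[ℝ] ℝ := g.mkContinuous M (fun z => by rw [Real.norm_eq_abs]; exact habs z)
    with hgC
  set q : H := (InnerProductSpace.toDual ℝ H).symm gC with hq
  refine ⟨q, ?_, ?_⟩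
  · have h1 : ‖q‖ = ‖gC‖ := ((InnerProductSpace.toDual ℝ H).symm.norm_map gC)
    rw [h1]
    exact g.mkContinuous_norm_le hM _
  · intro h
    have h1 : φ h = g (Bl h) := by
      rw [← hψval h]
      exact (hg1 ⟨Bl h, LinearMap.mem_range_self Bl h⟩).symm
    have h2 : ⟪q, B h⟫_ℝ = gC (B h) := InnerProductSpace.toDual_symm_apply
    have h3 : gC (B h) = g (Bl h) := rfl
    rw [h1, hBsa, h2, h3]

noncomputable def Ffun {H : Type*} [NormedAddCommGroup H] [InnerProductSpace ℝ H]
    (B : H →L[ℝ] H) (T m K lam ε β : ℝ) (w : ℝ → H → ℝ) (t : ℝ) (x : H) (p : ℝ × H) : ℝ :=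
  w p.1 p.2 + ⟪B (x - p.2), x - p.2⟫_ℝ / (2 * ε) + (t - p.1) ^ 2 / (2 * β)
    + lam * Real.exp (2 * m * K * (T - p.1)) * ‖p.2‖ ^ m


set_option maxHeartbeats 1000000 in
/-- Lemma 4.2(iii) (inf-convolution case): for every `R > 0` there is `M > 0` such that at
every point `(t,x) ∈ (0,T) × B_R` of Fréchet differentiability of `v = w_{λ,ε,β}` one has
`|v_t(t,x)| ≤ M` and `Dv(t,x) = Bq` for some `q` with `‖q‖ ≤ M`. -/
theorem infConv_derivative_structure
    {H : Type*} [NormedAddCommGroup H] [InnerProductSpace ℝ H] [CompleteSpace H]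
    [TopologicalSpace.SeparableSpace H]
    (B : H →L[ℝ] H) (hBsa : IsSelfAdjoint B) (hBpos : ∀ x : H, 0 ≤ ⟪B x, x⟫_ℝ)
    (T C k m K lam ε β : ℝ)
    (hT : 0 < T) (hC : 0 < C) (hk : 0 ≤ k) (hkm : k < m) (hm : 2 ≤ m)
    (hK : 0 < K) (hlam : 0 < lam) (hε : 0 < ε) (hβ : 0 < β)
    (w : ℝ → H → ℝ)
    (hbdd : ∀ R > (0 : ℝ), ∃ M : ℝ, ∀ t ∈ Set.Ioo (0 : ℝ) T, ∀ x : H, ‖x‖ ≤ R → |w t x| ≤ M)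
    (hgrowth : ∀ t ∈ Set.Ioo (0 : ℝ) T, ∀ x : H, -C * (1 + ‖x‖ ^ k) ≤ w t x) :
    ∀ R > (0 : ℝ), ∃ M > (0 : ℝ), ∀ t ∈ Set.Ioo (0 : ℝ) T, ∀ x : H, ‖x‖ < R →
      ∀ D : ℝ × H →L[ℝ] ℝ,
        HasFDerivAt (fun p : ℝ × H => infConv B T m K lam ε β w p.1 p.2) D (t, x) →
          |D ((1 : ℝ), (0 : H))| ≤ M ∧
          ∃ q : H, ‖q‖ ≤ M ∧ ∀ h : H, D ((0 : ℝ), h) = ⟪B q, h⟫_ℝ := by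
  intro R hR
  obtain ⟨Mw, hMw⟩ := hbdd R hR
  have hsym : ∀ u v : H, ⟪B u, v⟫_ℝ = ⟪u, B v⟫_ℝ :=
    fun u v => (ContinuousLinearMap.isSelfAdjoint_iff_isSymmetric.mp hBsa) u v
  have hIC : ∀ (t' : ℝ) (x' : H), infConv B T m K lam ε β w t' x'
      = sInf (Ffun B T m K lam ε β w t' x' '' (Set.Ioo 0 T ×ˢ (Set.univ : Set H))) := by
    intro t' x'
    rw [infConv]
    congr 1
  set r0 : ℝ := max 1 ((2*C/lam) ^ (m-k)⁻¹) with hr0def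
  have hr01 : (1:ℝ) ≤ r0 := le_max_left _ _
  -- lower bound for F on the domain in terms of ‖p.2‖
  have hFge : ∀ (t' : ℝ) (x' : H) (p : ℝ × H), p ∈ Set.Ioo (0:ℝ) T ×ˢ (Set.univ : Set H) →
      lam * ‖p.2‖ ^ m - C * (1 + ‖p.2‖ ^ k) ≤ Ffun B T m K lam ε β w t' x' p := by
    rintro t' x' ⟨s, y⟩ ⟨hs, -⟩
    have h1 : -C * (1 + ‖y‖ ^ k) ≤ w s y := hgrowth s hs y
    have h2 : 0 ≤ ⟪B (x' - y), x' - y⟫_ℝ / (2*ε) := div_nonneg (hBpos _) (by linarith)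
    have h3 : 0 ≤ (t' - s)^2/(2*β) := by positivity
    have h4 : (1:ℝ) ≤ Real.exp (2*m*K*(T - s)) := Real.one_le_exp
      (mul_nonneg (mul_nonneg (mul_nonneg (by norm_num) (by linarith)) hK.le)
        (by linarith [hs.2]))
    have h5 : (0:ℝ) ≤ ‖y‖ ^ m := Real.rpow_nonneg (norm_nonneg y) m
    have h7 : lam * ‖y‖ ^ m ≤ lam * Real.exp (2*m*K*(T - s)) * ‖y‖ ^ m := by
      nlinarith [mul_le_mul_of_nonneg_right (mul_le_mul_of_nonneg_left h4 hlam.le) h5]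
    simp only [Ffun]
    linarith
  have hbddB : ∀ (t' : ℝ) (x' : H),
      BddBelow (Ffun B T m K lam ε β w t' x' '' (Set.Ioo (0:ℝ) T ×ˢ (Set.univ : Set H))) := by
    intro t' x'
    refine ⟨-(C * (1 + r0 ^ k)), ?_⟩
    rintro z ⟨p, hp, rfl⟩
    have h1 := hFge t' x' p hp
    have h2 := rpow_aux3 hC hlam hk hkm ‖p.2‖ (norm_nonneg _)
    rw [← hr0def] at h2
    linarith
  have hneS : ((Set.Ioo (0:ℝ) T ×ˢ (Set.univ : Set H))).Nonempty :=
    ⟨(T/2, 0), ⟨⟨half_pos hT, half_lt_self hT⟩, Set.mem_univ _⟩⟩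
  have hvle : ∀ (t' : ℝ) (x' : H) (p : ℝ × H),
      p ∈ Set.Ioo (0:ℝ) T ×ˢ (Set.univ : Set H) →
      infConv B T m K lam ε β w t' x' ≤ Ffun B T m K lam ε β w t' x' p := by
    intro t' x' p hp
    rw [hIC]
    exact csInf_le (hbddB t' x') (Set.mem_image_of_mem _ hp)
  -- constants
  set UB : ℝ := Mw + lam * Real.exp (2*m*K*T) * R ^ m with hUBdef
  set A : ℝ := |UB| + 1 with hAdef
  set R1 : ℝ := max r0 ((2*(A+C)/lam) ^ m⁻¹) with hR1def
  have hR1r0 : r0 ≤ R1 := le_max_left _ _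
  set M1 : ℝ := (R + R1)/ε with hM1def
  have hM1pos : 0 < M1 := div_pos (by linarith) hε
  set M : ℝ := max (T/β) M1 + 1 with hMdef
  have hMpos : 0 < M := by
    rw [hMdef]
    have h1 := le_max_right (T/β) M1
    linarith
  refine ⟨M, hMpos, ?_⟩
  intro t ht x hx D hD
  -- upper bound on the inf-convolution at (t,x)
  have hvUB : infConv B T m K lam ε β w t x ≤ UB := by
    have h0 : ((t, x) : ℝ × H) ∈ Set.Ioo (0:ℝ) T ×ˢ (Set.univ : Set H) :=
      ⟨ht, Set.mem_univ _⟩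
    have h1 := hvle t x (t, x) h0
    have hw : w t x ≤ Mw := (abs_le.mp (hMw t ht x hx.le)).2
    have hexp : Real.exp (2*m*K*(T-t)) ≤ Real.exp (2*m*K*T) := by
      apply Real.exp_le_exp.mpr
      nlinarith [mul_nonneg (mul_nonneg (mul_nonneg (by norm_num : (0:ℝ) ≤ 2)
        (by linarith : (0:ℝ) ≤ m)) hK.le) ht.1.le]
    have hxm : ‖x‖ ^ m ≤ R ^ m :=
      Real.rpow_le_rpow (norm_nonneg x) hx.le (by linarith)
    have h5 : (0:ℝ) ≤ ‖x‖ ^ m := Real.rpow_nonneg (norm_nonneg x) m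
    have hR0 : (0:ℝ) ≤ R ^ m := Real.rpow_nonneg hR.le m
    have hterm : lam * Real.exp (2*m*K*(T-t)) * ‖x‖ ^ m
        ≤ lam * Real.exp (2*m*K*T) * R ^ m :=
      le_trans (mul_le_mul_of_nonneg_left hxm (by positivity))
        (mul_le_mul_of_nonneg_right (mul_le_mul_of_nonneg_left hexp hlam.le) hR0)
    have h2 : Ffun B T m K lam ε β w t x (t, x) = w t x + lam * Real.exp (2*m*K*(T-t)) * ‖x‖ ^ m := by
      simp [Ffun, sub_self]
    rw [h2] at h1
    rw [hUBdef]
    linarith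
  -- near-optimal points
  have hnear : ∀ δ : ℝ, 0 < δ → ∃ p : ℝ × H,
      p ∈ Set.Ioo (0:ℝ) T ×ˢ (Set.univ : Set H) ∧
      Ffun B T m K lam ε β w t x p ≤ infConv B T m K lam ε β w t x + δ ∧ (δ ≤ 1 → ‖p.2‖ ≤ R1) := by
    intro δ hδ
    have hne2 : (Ffun B T m K lam ε β w t x '' (Set.Ioo (0:ℝ) T ×ˢ (Set.univ : Set H))).Nonempty :=
      hneS.image _
    have hlt : sInf (Ffun B T m K lam ε β w t x '' (Set.Ioo (0:ℝ) T ×ˢ (Set.univ : Set H)))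
        < infConv B T m K lam ε β w t x + δ := by
      rw [hIC] at hvUB ⊢
      linarith
    obtain ⟨z, hz, hzlt⟩ := exists_lt_of_csInf_lt hne2 hlt
    obtain ⟨p, hp, rfl⟩ := hz
    refine ⟨p, hp, hzlt.le, ?_⟩
    intro hδ1
    have h1 : Ffun B T m K lam ε β w t x p ≤ A := by
      have h2 := le_abs_self UB
      rw [hAdef]
      linarith
    have h3 := hFge t x p hp
    have h4 := rpow_aux2 hC hlam hkm (by linarith : (0:ℝ) < m) ‖p.2‖ (norm_nonneg _)
      (by linarith : lam * ‖p.2‖ ^ m - C * (1 + ‖p.2‖ ^ k) ≤ A)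
    rw [← hr0def, ← hR1def] at h4
    exact h4
  -- the core directional inequality
  have hkey : ∀ p : ℝ × H, p ∈ Set.Ioo (0:ℝ) T ×ˢ (Set.univ : Set H) →
      ∀ (τ : ℝ) (h : H) (s : ℝ),
      infConv B T m K lam ε β w (t + s*τ) (x + s•h) ≤
        Ffun B T m K lam ε β w t x p + s * (τ * ((t - p.1)/β) + ⟪B (ε⁻¹ • (x - p.2)), h⟫_ℝ)
          + s^2 * (τ^2/(2*β) + ⟪B h, h⟫_ℝ/(2*ε)) := by
    rintro ⟨s₀, y⟩ hp τ h s
    have h1 := hvle (t + s*τ) (x + s•h) (s₀, y) hp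
    refine le_trans h1 (le_of_eq ?_)
    have hinner : ⟪B (x + s•h - y), x + s•h - y⟫_ℝ
        = ⟪B (x - y), x - y⟫_ℝ + 2*(s*⟪B (x - y), h⟫_ℝ) + s^2*⟪B h, h⟫_ℝ := by
      have e1 : x + s•h - y = (x - y) + s•h := by abel
      have e2 : ⟪B h, x - y⟫_ℝ = ⟪B (x - y), h⟫_ℝ := by
        rw [hsym]; exact real_inner_comm _ _
      rw [e1, map_add, map_smul, inner_add_left, inner_add_right, inner_add_right,
        real_inner_smul_right, real_inner_smul_left, real_inner_smul_left,
        real_inner_smul_right, e2]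
      ring
    have hqin : ⟪B (ε⁻¹ • (x - y)), h⟫_ℝ = ε⁻¹ * ⟪B (x - y), h⟫_ℝ := by
      rw [map_smul, real_inner_smul_left]
    simp only [Ffun]
    rw [hinner, hqin]
    have hsq : (t + s*τ - s₀)^2 = (t - s₀)^2 + 2*(s*(τ*(t-s₀))) + s^2*τ^2 := by ring
    rw [hsq]
    field_simp
    ring
  -- the two-sided derivative estimate
  have hmain : ∀ (τ : ℝ) (h : H) (θ : ℝ), 0 < θ → ∃ (a : ℝ) (q : H),
      |a| ≤ T/β ∧ ‖q‖ ≤ M1 ∧ |D ((τ, h) : ℝ × H) - (τ * a + ⟪B q, h⟫_ℝ)| ≤ θ := by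
    intro τ h θ hθ
    have hline : HasDerivAt (fun s : ℝ => ((t, x) : ℝ × H) + s • ((τ, h) : ℝ × H))
        ((τ, h) : ℝ × H) 0 := by
      simpa using ((hasDerivAt_id (0:ℝ)).smul_const ((τ, h) : ℝ × H)).const_add
        ((t, x) : ℝ × H)
    have hD' : HasFDerivAt (fun p : ℝ × H => infConv B T m K lam ε β w p.1 p.2) D
        (((t, x) : ℝ × H) + (0:ℝ) • ((τ, h) : ℝ × H)) := by
      rw [show ((t, x) : ℝ × H) + (0:ℝ) • ((τ, h) : ℝ × H) = (t, x) by simp]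
      exact hD
    have hg : HasDerivAt (fun s : ℝ => infConv B T m K lam ε β w (t + s*τ) (x + s•h))
        (D ((τ, h) : ℝ × H)) 0 := by
      have h2 := hD'.comp_hasDerivAt 0 hline
      have heq : (fun s : ℝ => infConv B T m K lam ε β w (t + s*τ) (x + s•h))
          = (fun p : ℝ × H => infConv B T m K lam ε β w p.1 p.2)
            ∘ (fun s : ℝ => ((t, x) : ℝ × H) + s • ((τ, h) : ℝ × H)) := by
        funext s
        simp [Function.comp, smul_eq_mul]
      rw [heq]
      exact h2
    have hev := Asymptotics.isLittleO_iff.mp (hasDerivAt_iff_isLittleO.mp hg)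
      (show (0:ℝ) < θ/4 by linarith)
    rw [Metric.eventually_nhds_iff] at hev
    obtain ⟨ρ, hρ, hball⟩ := hev
    obtain ⟨c, hcdef⟩ : ∃ c : ℝ, c = τ^2/(2*β) + ⟪B h, h⟫_ℝ/(2*ε) := ⟨_, rfl⟩
    have hc : 0 ≤ c := by
      rw [hcdef]
      exact add_nonneg (by positivity) (div_nonneg (hBpos h) (by linarith))
    obtain ⟨s, hs0, hsρ, hsc, hsδ⟩ :
        ∃ s : ℝ, 0 < s ∧ s < ρ ∧ s * c ≤ θ/4 ∧ s * (θ/4) ≤ 1 := by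
      refine ⟨min (ρ/2) (min ((θ/4)/(c+1)) (1/(1+θ/4))), ?_, ?_, ?_, ?_⟩
      · exact lt_min (by linarith)
          (lt_min (div_pos (by linarith) (by linarith)) (by positivity))
      · exact lt_of_le_of_lt (min_le_left _ _) (by linarith)
      · have h1 : min (ρ/2) (min ((θ/4)/(c+1)) (1/(1+θ/4))) ≤ (θ/4)/(c+1) :=
          le_trans (min_le_right _ _) (min_le_left _ _)
        have h2 : (θ/4)/(c+1) * c ≤ θ/4 := by
          rw [div_mul_eq_mul_div, div_le_iff₀ (by linarith)]
          nlinarith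
        exact le_trans (mul_le_mul_of_nonneg_right h1 hc) h2
      · have h1 : min (ρ/2) (min ((θ/4)/(c+1)) (1/(1+θ/4))) ≤ 1/(1+θ/4) :=
          le_trans (min_le_right _ _) (min_le_right _ _)
        have h2 : (1/(1+θ/4)) * (θ/4) ≤ 1 := by
          rw [div_mul_eq_mul_div, div_le_one (by linarith)]
          linarith
        exact le_trans (mul_le_mul_of_nonneg_right h1 (by linarith)) h2
    obtain ⟨p, hp, hpF, hpR⟩ := hnear (s*(θ/4)) (mul_pos hs0 (by linarith))
    have hy : ‖p.2‖ ≤ R1 := hpR hsδ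
    refine ⟨(t - p.1)/β, ε⁻¹ • (x - p.2), ?_, ?_, ?_⟩
    · have habs : |t - p.1| ≤ T :=
        abs_le.mpr ⟨by linarith [ht.1, ht.2, hp.1.1, hp.1.2],
          by linarith [ht.1, ht.2, hp.1.1, hp.1.2]⟩
      rw [abs_div, abs_of_pos hβ]
      exact div_le_div_of_nonneg_right habs hβ.le
    · have hz : ‖x - p.2‖ ≤ R + R1 :=
        le_trans (norm_sub_le _ _) (by linarith [hx.le, hy])
      have hn : ‖ε⁻¹ • (x - p.2)‖ = ε⁻¹ * ‖x - p.2‖ := by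
        rw [norm_smul, Real.norm_eq_abs, abs_of_pos (by positivity)]
      rw [hn, hM1def, div_eq_inv_mul]
      exact mul_le_mul_of_nonneg_left hz (inv_nonneg.2 hε.le)
    · obtain ⟨a, hadef⟩ : ∃ a : ℝ, a = (t - p.1)/β := ⟨_, rfl⟩
      obtain ⟨q, hqdef⟩ : ∃ q : H, q = ε⁻¹ • (x - p.2) := ⟨_, rfl⟩
      obtain ⟨L, hLdef⟩ : ∃ L : ℝ, L = τ * a + ⟪B q, h⟫_ℝ := ⟨_, rfl⟩
      have E1 : infConv B T m K lam ε β w (t + s*τ) (x + s•h)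
          ≤ Ffun B T m K lam ε β w t x p + s * L + s^2 * c := by
        rw [hLdef, hadef, hqdef, hcdef]
        exact hkey p hp τ h s
      have E2 : infConv B T m K lam ε β w (t + (-s)*τ) (x + (-s)•h)
          ≤ Ffun B T m K lam ε β w t x p + (-s) * L + s^2 * c := by
        have h9 : infConv B T m K lam ε β w (t + (-s)*τ) (x + (-s)•h)
            ≤ Ffun B T m K lam ε β w t x p + (-s) * L + (-s)^2 * c := by
          rw [hLdef, hadef, hqdef, hcdef]
          exact hkey p hp τ h (-s)
        calc infConv B T m K lam ε β w (t + (-s)*τ) (x + (-s)•h)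
            ≤ Ffun B T m K lam ε β w t x p + (-s) * L + (-s)^2 * c := h9
          _ = Ffun B T m K lam ε β w t x p + (-s) * L + s^2 * c := by ring
      have hd1 := hball (show dist s 0 < ρ by
        rw [Real.dist_eq, sub_zero, abs_of_pos hs0]; exact hsρ)
      have hd2 := hball (show dist (-s) 0 < ρ by
        rw [Real.dist_eq, sub_zero, abs_neg, abs_of_pos hs0]; exact hsρ)
      simp only [sub_zero, smul_eq_mul, Real.norm_eq_abs, zero_mul, add_zero,
        zero_smul] at hd1 hd2
      rw [abs_of_pos hs0] at hd1
      rw [abs_neg, abs_of_pos hs0] at hd2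
      have hd1' := abs_le.mp hd1
      have hd2' := abs_le.mp hd2
      have hs2c : s^2 * c ≤ s * (θ/4) := by
        calc s^2 * c = s * (s * c) := by ring
          _ ≤ s * (θ/4) := mul_le_mul_of_nonneg_left hsc hs0.le
      have up1 : s * D ((τ, h) : ℝ × H) - s * L ≤ s * θ := by
        linarith [hd1'.1, hd1'.2, E1, hpF, hs2c, mul_pos hs0 hθ]
      have low1 : s * L - s * D ((τ, h) : ℝ × H) ≤ s * θ := by
        linarith [hd2'.1, hd2'.2, E2, hpF, hs2c, mul_pos hs0 hθ]
      have up2 : D ((τ, h) : ℝ × H) - L ≤ θ :=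
        le_of_mul_le_mul_left (by linarith : s * (D ((τ, h) : ℝ × H) - L) ≤ s * θ) hs0
      have low2 : L - D ((τ, h) : ℝ × H) ≤ θ :=
        le_of_mul_le_mul_left (by linarith : s * (L - D ((τ, h) : ℝ × H)) ≤ s * θ) hs0
      rw [← hadef, ← hqdef, ← hLdef]
      exact abs_le.mpr ⟨by linarith, by linarith⟩
  -- time derivative bound
  have hDt : |D ((1 : ℝ), (0 : H))| ≤ T/β := by
    refine le_of_forall_pos_le_add ?_
    intro θ hθ
    obtain ⟨a, q, ha, hq, hest⟩ := hmain 1 0 θ hθ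
    rw [inner_zero_right, add_zero, one_mul] at hest
    have h1 := abs_sub_abs_le_abs_sub (D ((1 : ℝ), (0 : H))) a
    linarith
  -- spatial derivative bound
  have hDx : ∀ h : H, |D ((0 : ℝ), h)| ≤ M1 * ‖B h‖ := by
    intro h
    refine le_of_forall_pos_le_add ?_
    intro θ hθ
    obtain ⟨a, q, ha, hq, hest⟩ := hmain 0 h θ hθ
    rw [zero_mul, zero_add] at hest
    have h1 : |⟪B q, h⟫_ℝ| ≤ M1 * ‖B h‖ := by
      rw [hsym]
      calc |⟪q, B h⟫_ℝ| ≤ ‖q‖ * ‖B h‖ := abs_real_inner_le_norm _ _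
        _ ≤ M1 * ‖B h‖ := mul_le_mul_of_nonneg_right hq (norm_nonneg _)
    have h2 := abs_sub_abs_le_abs_sub (D ((0 : ℝ), h)) (⟪B q, h⟫_ℝ)
    linarith
  -- representation
  set φL : H →ₗ[ℝ] ℝ := (D : ℝ × H →ₗ[ℝ] ℝ).comp (LinearMap.inr ℝ ℝ H) with hφL
  have hφval : ∀ h : H, φL h = D ((0 : ℝ), h) := fun h => rfl
  obtain ⟨q, hqM, hqrep⟩ := exists_rep B hsym φL M1 hM1pos.le
    (fun h => by rw [hφval]; exact hDx h)
  have hTM : T/β ≤ M := by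
    rw [hMdef]
    have := le_max_left (T/β) M1
    linarith
  have hM1M : M1 ≤ M := by
    rw [hMdef]
    have := le_max_right (T/β) M1
    linarith
  exact ⟨hDt.trans hTM, q, hqM.trans hM1M, fun h => by rw [← hqrep h, hφval]⟩
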